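/- For any four jointly distributed finite discrete random variables X₀, X₁, Y₀, Y₁, the Braunstein–Caves entropic Bell inequality holds: H(Y₁|X₁) + H(X₁|Y₀) + H(X₀|Y₁) - H(X₀|Y₀) ≥ 0. -/

import Mathlib

open Finset

/-- Probability that the random variable `X` takes value `x`, for weights `μ`. -/
noncomputable def prob {Ω α : Type} [Fintype Ω] [Fintype α] [DecidableEq α]
    (μ : Ω → ℝ) (X : Ω → α) (x : α) : ℝ :=
  ∑ ω, if X ω = x then μ ω else 0

/-- Shannon entropy (base 2) of a finite discrete random variable,
with the convention `0 * log₂ 0 = 0` (since `Real.logb 2 0 = 0`). -/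
noncomputable def ent {Ω α : Type} [Fintype Ω] [Fintype α] [DecidableEq α]
    (μ : Ω → ℝ) (X : Ω → α) : ℝ :=
  -∑ x, prob μ X x * Real.logb 2 (prob μ X x)

/-- `μ` is a probability mass function on the finite sample space `Ω`. -/
def IsPMF {Ω : Type} [Fintype Ω] (μ : Ω → ℝ) : Prop :=
  (∀ ω, 0 ≤ μ ω) ∧ ∑ ω, μ ω = 1

/-- Mutual information `I(X:Y) = H(X) + H(Y) - H(X,Y)`. -/
noncomputable def mutualInfo {Ω α β : Type} [Fintype Ω] [Fintype α] [Fintype β]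
    [DecidableEq α] [DecidableEq β] (μ : Ω → ℝ) (X : Ω → α) (Y : Ω → β) : ℝ :=
  ent μ X + ent μ Y - ent μ (fun ω => (X ω, Y ω))

/-- Conditional mutual information
`I(X:Y|Z) = H(X,Z) + H(Y,Z) - H(Z) - H(X,Y,Z)`. -/
noncomputable def condMutualInfo {Ω α β γ : Type} [Fintype Ω] [Fintype α] [Fintype β]
    [Fintype γ] [DecidableEq α] [DecidableEq β] [DecidableEq γ]
    (μ : Ω → ℝ) (X : Ω → α) (Y : Ω → β) (Z : Ω → γ) : ℝ :=
  ent μ (fun ω => (X ω, Z ω)) + ent μ (fun ω => (Y ω, Z ω)) - ent μ Z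
    - ent μ (fun ω => (X ω, Y ω, Z ω))

/-- Conditional entropy `H(X|Y) = H(X,Y) - H(Y)`. -/
noncomputable def condEnt {Ω α β : Type} [Fintype Ω] [Fintype α] [Fintype β]
    [DecidableEq α] [DecidableEq β] (μ : Ω → ℝ) (X : Ω → α) (Y : Ω → β) : ℝ :=
  ent μ (fun ω => (X ω, Y ω)) - ent μ Y


section Aux

variable {Ω α β γ : Type} [Fintype Ω] [Fintype α] [Fintype β] [Fintype γ]
  [DecidableEq α] [DecidableEq β] [DecidableEq γ]

lemma prob_nonneg (μ : Ω → ℝ) (hnn : ∀ ω, 0 ≤ μ ω) (X : Ω → α) (x : α) :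
    0 ≤ prob μ X x :=
  Finset.sum_nonneg fun ω _ => by by_cases h : X ω = x <;> simp [h, hnn ω]

lemma le_prob (μ : Ω → ℝ) (hnn : ∀ ω, 0 ≤ μ ω) (X : Ω → α) (ω0 : Ω) :
    μ ω0 ≤ prob μ X (X ω0) := by
  have := Finset.single_le_sum (f := fun ω => if X ω = X ω0 then μ ω else 0)
    (fun ω _ => by by_cases h : X ω = X ω0 <;> simp [h, hnn ω]) (Finset.mem_univ ω0)
  simpa [prob] using this

lemma prob_le_comp {α' : Type} [Fintype α'] [DecidableEq α'] (μ : Ω → ℝ)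
    (hnn : ∀ ω, 0 ≤ μ ω) (X : Ω → α) (g : α → α') (a : α) :
    prob μ X a ≤ prob μ (fun ω => g (X ω)) (g a) :=
  Finset.sum_le_sum fun ω _ => by
    by_cases h : X ω = a
    · simp [h]
    · simp only [if_neg h]
      by_cases h2 : g (X ω) = g a <;> simp [h2, hnn ω]

lemma sum_prob_mul (μ : Ω → ℝ) (X : Ω → α) (φ : α → ℝ) :
    ∑ a, prob μ X a * φ a = ∑ ω, μ ω * φ (X ω) := by
  simp only [prob, Finset.sum_mul, ite_mul, zero_mul]
  rw [Finset.sum_comm]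
  refine Finset.sum_congr rfl fun ω _ => ?_
  simp

lemma sum_prob (μ : Ω → ℝ) (hsum : ∑ ω, μ ω = 1) (X : Ω → α) :
    ∑ a, prob μ X a = 1 := by
  have := sum_prob_mul μ X (fun _ => 1)
  simpa [hsum] using this

lemma ent_eq (μ : Ω → ℝ) (X : Ω → α) :
    ent μ X = -∑ ω, μ ω * Real.logb 2 (prob μ X (X ω)) := by
  rw [ent, sum_prob_mul]

lemma prob_comp_inj {α' : Type} [Fintype α'] [DecidableEq α'] (μ : Ω → ℝ)
    (X : Ω → α) {f : α → α'} (hf : Function.Injective f) (a : α) :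
    prob μ (fun ω => f (X ω)) (f a) = prob μ X a := by
  refine Finset.sum_congr rfl fun ω _ => ?_
  simp [hf.eq_iff]

lemma ent_comp_inj {α' : Type} [Fintype α'] [DecidableEq α'] (μ : Ω → ℝ)
    (X : Ω → α) {f : α → α'} (hf : Function.Injective f) :
    ent μ (fun ω => f (X ω)) = ent μ X := by
  rw [ent_eq, ent_eq]
  congr 1
  refine Finset.sum_congr rfl fun ω _ => ?_
  rw [prob_comp_inj μ X hf]

lemma marg_fst (μ : Ω → ℝ) (X : Ω → α) (Z : Ω → γ) (z : γ) :
    ∑ x, prob μ (fun ω => (X ω, Z ω)) (x, z) = prob μ Z z := by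
  simp only [prob]
  rw [Finset.sum_comm]
  refine Finset.sum_congr rfl fun ω _ => ?_
  by_cases h : Z ω = z <;> simp [Prod.ext_iff, h]

lemma ent_le_ent_pair (μ : Ω → ℝ) (hnn : ∀ ω, 0 ≤ μ ω) (X : Ω → α) (Y : Ω → β) :
    ent μ Y ≤ ent μ (fun ω => (X ω, Y ω)) := by
  rw [ent_eq, ent_eq]
  apply neg_le_neg
  apply Finset.sum_le_sum
  intro ω _
  rcases eq_or_lt_of_le (hnn ω) with h | h
  · simp [← h]
  · refine mul_le_mul_of_nonneg_left ?_ (le_of_lt h)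
    refine Real.logb_le_logb_of_le one_lt_two ?_ ?_
    · exact lt_of_lt_of_le h (le_prob μ hnn (fun ω => (X ω, Y ω)) ω)
    · exact prob_le_comp μ hnn (fun ω => (X ω, Y ω)) Prod.snd (X ω, Y ω)

lemma triple_sum_comm (g : α → β → γ → ℝ) :
    ∑ x, ∑ y, ∑ z, g x y z = ∑ z, ∑ x, ∑ y, g x y z :=
  calc ∑ x, ∑ y, ∑ z, g x y z
      = ∑ x, ∑ z, ∑ y, g x y z :=
        Finset.sum_congr rfl fun x _ => Finset.sum_comm
    _ = ∑ z, ∑ x, ∑ y, g x y z := Finset.sum_comm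

lemma submod (μ : Ω → ℝ) (hμ : IsPMF μ) (X : Ω → α) (Y : Ω → β) (Z : Ω → γ) :
    ent μ Z + ent μ (fun ω => (X ω, Y ω, Z ω)) ≤
      ent μ (fun ω => (X ω, Z ω)) + ent μ (fun ω => (Y ω, Z ω)) := by
  obtain ⟨hnn, hsum⟩ := hμ
  set pZ := prob μ Z with hpZ
  set pXZ := prob μ (fun ω => (X ω, Z ω)) with hpXZ
  set pYZ := prob μ (fun ω => (Y ω, Z ω)) with hpYZ
  set pXYZ := prob μ (fun ω => (X ω, Y ω, Z ω)) with hpXYZ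
  have hpZnn : ∀ z, 0 ≤ pZ z := prob_nonneg μ hnn Z
  have hpXZnn : ∀ t, 0 ≤ pXZ t := prob_nonneg μ hnn _
  have hpYZnn : ∀ t, 0 ≤ pYZ t := prob_nonneg μ hnn _
  have hpXYZnn : ∀ t, 0 ≤ pXYZ t := prob_nonneg μ hnn _
  have hlog2 : (0:ℝ) < Real.log 2 := Real.log_pos one_lt_two
  -- key bound : ∑ ω, μ ω * q ω ≤ 1
  have hS : ∑ ω, μ ω * (pXZ (X ω, Z ω) * pYZ (Y ω, Z ω) /
      (pXYZ (X ω, Y ω, Z ω) * pZ (Z ω))) ≤ 1 := by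
    rw [← sum_prob_mul μ (fun ω => (X ω, Y ω, Z ω))
      (fun t => pXZ (t.1, t.2.2) * pYZ (t.2.1, t.2.2) / (pXYZ t * pZ t.2.2))]
    have step1 : ∑ t : α × β × γ,
        pXYZ t * (pXZ (t.1, t.2.2) * pYZ (t.2.1, t.2.2) / (pXYZ t * pZ t.2.2))
        ≤ ∑ t : α × β × γ, pXZ (t.1, t.2.2) * pYZ (t.2.1, t.2.2) / pZ t.2.2 := by
      apply Finset.sum_le_sum
      intro t _
      rcases eq_or_lt_of_le (hpXYZnn t) with h | h
      · rw [← h, zero_mul]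
        exact div_nonneg (mul_nonneg (hpXZnn _) (hpYZnn _)) (hpZnn _)
      · rw [mul_div_assoc', mul_div_mul_left _ _ (ne_of_gt h)]
    refine le_trans step1 ?_
    have step2 : ∑ t : α × β × γ, pXZ (t.1, t.2.2) * pYZ (t.2.1, t.2.2) / pZ t.2.2
        = ∑ z, (∑ x, pXZ (x, z)) * (∑ y, pYZ (y, z)) / pZ z := by
      rw [Fintype.sum_prod_type]
      simp only [Fintype.sum_prod_type]
      rw [triple_sum_comm (fun x y z => pXZ (x, z) * pYZ (y, z) / pZ z)]
      refine Finset.sum_congr rfl fun z _ => ?_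
      rw [Finset.sum_mul, Finset.sum_div]
      refine Finset.sum_congr rfl fun x _ => ?_
      rw [Finset.mul_sum, Finset.sum_div]
    rw [step2]
    calc ∑ z, (∑ x, pXZ (x, z)) * (∑ y, pYZ (y, z)) / pZ z
        ≤ ∑ z, pZ z := by
          apply Finset.sum_le_sum
          intro z _
          rw [marg_fst μ X Z z, marg_fst μ Y Z z]
          rcases eq_or_lt_of_le (hpZnn z) with h | h
          · rw [← h]; simp
          · rw [mul_div_assoc, div_self (ne_of_gt h), mul_one]
      _ = 1 := sum_prob μ hsum Z
  -- pointwise log bound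
  have bound : ∀ ω, μ ω * Real.logb 2 (pXZ (X ω, Z ω)) + μ ω * Real.logb 2 (pYZ (Y ω, Z ω))
      - μ ω * Real.logb 2 (pZ (Z ω)) - μ ω * Real.logb 2 (pXYZ (X ω, Y ω, Z ω))
      ≤ (μ ω * (pXZ (X ω, Z ω) * pYZ (Y ω, Z ω) / (pXYZ (X ω, Y ω, Z ω) * pZ (Z ω))) - μ ω)
          / Real.log 2 := by
    intro ω
    rcases eq_or_lt_of_le (hnn ω) with h | h
    · simp [← h]
    · have h1 : 0 < pXZ (X ω, Z ω) := lt_of_lt_of_le h (le_prob μ hnn _ ω)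
      have h2 : 0 < pYZ (Y ω, Z ω) := lt_of_lt_of_le h (le_prob μ hnn _ ω)
      have h3 : 0 < pZ (Z ω) := lt_of_lt_of_le h (le_prob μ hnn Z ω)
      have h4 : 0 < pXYZ (X ω, Y ω, Z ω) := lt_of_lt_of_le h (le_prob μ hnn _ ω)
      set q := pXZ (X ω, Z ω) * pYZ (Y ω, Z ω) / (pXYZ (X ω, Y ω, Z ω) * pZ (Z ω)) with hq
      have hqpos : 0 < q := div_pos (mul_pos h1 h2) (mul_pos h4 h3)
      have hlq : Real.log q ≤ q - 1 := Real.log_le_sub_one_of_pos hqpos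
      have hcomb : Real.log q = Real.log (pXZ (X ω, Z ω)) + Real.log (pYZ (Y ω, Z ω))
          - Real.log (pZ (Z ω)) - Real.log (pXYZ (X ω, Y ω, Z ω)) := by
        rw [hq, Real.log_div (by positivity) (by positivity),
          Real.log_mul (ne_of_gt h1) (ne_of_gt h2),
          Real.log_mul (ne_of_gt h4) (ne_of_gt h3)]
        ring
      simp only [Real.logb]
      have expand : μ ω * (Real.log (pXZ (X ω, Z ω)) / Real.log 2)
          + μ ω * (Real.log (pYZ (Y ω, Z ω)) / Real.log 2)
          - μ ω * (Real.log (pZ (Z ω)) / Real.log 2)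
          - μ ω * (Real.log (pXYZ (X ω, Y ω, Z ω)) / Real.log 2)
          = μ ω * Real.log q / Real.log 2 := by
        rw [hcomb]; ring
      rw [expand]
      have hmul : μ ω * Real.log q ≤ μ ω * (q - 1) := mul_le_mul_of_nonneg_left hlq h.le
      exact (div_le_div_iff_of_pos_right hlog2).mpr (by linarith)
  -- sum up
  rw [ent_eq μ Z, ent_eq μ (fun ω => (X ω, Y ω, Z ω)), ent_eq μ (fun ω => (X ω, Z ω)),
    ent_eq μ (fun ω => (Y ω, Z ω))]
  have hsum1 := Finset.sum_le_sum (fun ω _ => bound ω) (s := (Finset.univ : Finset Ω))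
  have hL : ∑ ω, (μ ω * (pXZ (X ω, Z ω) * pYZ (Y ω, Z ω) /
      (pXYZ (X ω, Y ω, Z ω) * pZ (Z ω))) - μ ω) / Real.log 2 ≤ 0 := by
    rw [← Finset.sum_div, Finset.sum_sub_distrib, hsum]
    apply div_nonpos_of_nonpos_of_nonneg (by linarith) hlog2.le
  have hmain := le_trans hsum1 hL
  rw [Finset.sum_sub_distrib, Finset.sum_sub_distrib, Finset.sum_add_distrib] at hmain
  linarith

end Aux

set_option maxHeartbeats 1000000 in
/-- Braunstein–Caves entropic Bell inequality:
H(Y₁|X₁) + H(X₁|Y₀) + H(X₀|Y₁) - H(X₀|Y₀) ≥ 0. -/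
theorem braunstein_caves
    {Ω α β : Type} [Fintype Ω] [Fintype α] [Fintype β] [DecidableEq α] [DecidableEq β]
    (μ : Ω → ℝ) (hμ : IsPMF μ)
    (X0 X1 : Ω → α) (Y0 Y1 : Ω → β) :
    0 ≤ condEnt μ Y1 X1 + condEnt μ X1 Y0 + condEnt μ X0 Y1 - condEnt μ X0 Y0 := by
  have hnn := hμ.1
  -- monotonicity: H(X0,Y0) ≤ H of the full 4-tuple
  have hM : ent μ (fun ω => (X0 ω, Y0 ω)) ≤
      ent μ (fun ω => ((X1 ω, Y1 ω), (X0 ω, Y0 ω))) :=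
    ent_le_ent_pair μ hnn (fun ω => (X1 ω, Y1 ω)) (fun ω => (X0 ω, Y0 ω))
  have hf1 : Function.Injective
      (fun p : (α × β) × (α × β) => (p.2.1, ((p.1.1, p.2.2), p.1.2))) := by
    intro p q h
    obtain ⟨⟨a1, b1⟩, a2, b2⟩ := p
    obtain ⟨⟨c1, d1⟩, c2, d2⟩ := q
    simp only [Prod.mk.injEq] at h ⊢
    tauto
  have relabel1 : ent μ (fun ω => (X0 ω, (X1 ω, Y0 ω), Y1 ω)) =
      ent μ (fun ω => ((X1 ω, Y1 ω), (X0 ω, Y0 ω))) :=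
    ent_comp_inj μ (fun ω => ((X1 ω, Y1 ω), (X0 ω, Y0 ω))) hf1
  have hS1 : ent μ Y1 + ent μ (fun ω => (X0 ω, (X1 ω, Y0 ω), Y1 ω)) ≤
      ent μ (fun ω => (X0 ω, Y1 ω)) + ent μ (fun ω => ((X1 ω, Y0 ω), Y1 ω)) :=
    submod μ hμ X0 (fun ω => (X1 ω, Y0 ω)) Y1
  have hS2 : ent μ X1 + ent μ (fun ω => (Y1 ω, Y0 ω, X1 ω)) ≤
      ent μ (fun ω => (Y1 ω, X1 ω)) + ent μ (fun ω => (Y0 ω, X1 ω)) :=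
    submod μ hμ Y1 Y0 X1
  have hf2 : Function.Injective
      (fun p : (α × β) × β => (p.2, (p.1.2, p.1.1))) := by
    intro p q h
    obtain ⟨⟨a1, b1⟩, b2⟩ := p
    obtain ⟨⟨c1, d1⟩, d2⟩ := q
    simp only [Prod.mk.injEq] at h ⊢
    tauto
  have relabel2 : ent μ (fun ω => (Y1 ω, Y0 ω, X1 ω)) =
      ent μ (fun ω => ((X1 ω, Y0 ω), Y1 ω)) :=
    ent_comp_inj μ (fun ω => ((X1 ω, Y0 ω), Y1 ω)) hf2
  have relabel3 : ent μ (fun ω => (Y0 ω, X1 ω)) =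
      ent μ (fun ω => (X1 ω, Y0 ω)) :=
    ent_comp_inj μ (fun ω => (X1 ω, Y0 ω)) Prod.swap_injective
  simp only [condEnt]
  linarith
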